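/- Let E be a Banach space and S, B with B ∈ L(E), and let f : [0,T] → ℝ≥0 be continuous. If f(t) ≤ M e^{κ t} c₀ + M‖B‖ ∫₀^t e^{κ(t−s)} (t−s)^{−α} f(s) ds for all t ∈ [0,T], with constants M ≥ 1, κ ∈ ℝ, α ∈ [0,1), c₀ ≥ 0, then there exist constants c ≥ 1 and ω ∈ ℝ (depending only on M, ‖B‖, κ, α, T) such that f(t) ≤ c e^{ω t} c₀ for all t ∈ [0,T]. -/

import Mathlib

open MeasureTheory intervalIntegral Set

/-- Integrability of the singular kernel times a continuous function. -/
lemma gron_int {α : ℝ} (hα0 : 0 ≤ α) (hα1 : α < 1) (t κ : ℝ) (g : ℝ → ℝ)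
    (hg : ContinuousOn g (Set.uIcc 0 t)) :
    IntervalIntegrable (fun s => Real.exp (κ * (t - s)) * (t - s) ^ (-α) * g s)
      MeasureTheory.volume 0 t := by
  have h1 : IntervalIntegrable (fun u : ℝ => u ^ (-α)) volume 0 t :=
    intervalIntegrable_rpow' (by linarith)
  have h2 := (h1.comp_sub_left t)
  simp only [sub_zero, sub_self] at h2
  have h2' : IntervalIntegrable (fun s : ℝ => (t - s) ^ (-α)) volume 0 t := h2.symm
  have hc : ContinuousOn (fun s => Real.exp (κ * (t - s)) * g s) (Set.uIcc 0 t) :=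
    (((continuous_const.mul (continuous_const.sub continuous_id)).rexp).continuousOn).mul hg
  have := h2'.continuousOn_mul hc
  refine this.congr ?_
  intro s _
  ring

open MeasureTheory intervalIntegral Set

lemma gron_decay {α : ℝ} (hα0 : 0 ≤ α) (hα1 : α < 1) {T ε : ℝ} (hT : 0 < T) (hε : 0 < ε) :
    ∃ l ≥ (0:ℝ), (∫ u in (0:ℝ)..T, Real.exp (-(l*u)) * u ^ (-α)) ≤ ε := by
  have h1α : (0:ℝ) < 1 - α := by linarith
  set δ₀ : ℝ := ((1-α) * (ε/2)) ^ ((1:ℝ)/(1-α)) with hδ₀def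
  have hδ₀ : 0 < δ₀ := Real.rpow_pos_of_pos (by positivity) _
  set δ : ℝ := min T δ₀ with hδdef
  have hδpos : 0 < δ := lt_min hT hδ₀
  have hδT : δ ≤ T := min_le_left _ _
  -- first bound : δ^(1-α)/(1-α) ≤ ε/2
  have hδ₀pow : δ₀ ^ (1-α) = (1-α) * (ε/2) := by
    rw [hδ₀def, ← Real.rpow_mul (by positivity), one_div,
      inv_mul_cancel₀ (ne_of_gt h1α), Real.rpow_one]
  have hδint : δ ^ (1-α) / (1-α) ≤ ε/2 := by
    have h1 : δ ^ (1-α) ≤ δ₀ ^ (1-α) :=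
      Real.rpow_le_rpow hδpos.le (min_le_right _ _) h1α.le
    rw [hδ₀pow] at h1
    rw [div_le_iff₀ h1α]
    calc δ ^ (1-α) ≤ (1-α) * (ε/2) := h1
      _ = ε/2 * (1-α) := by ring
  set A : ℝ := δ ^ (-α) * T with hAdef
  have hA : 0 < A := mul_pos (Real.rpow_pos_of_pos hδpos _) hT
  set l : ℝ := max 0 (Real.log (A / (ε/2)) / δ) with hldef
  have hl0 : (0:ℝ) ≤ l := le_max_left _ _
  have hexp : Real.exp (-(l*δ)) * A ≤ ε/2 := by
    have hlog : Real.log (A / (ε/2)) ≤ l * δ := by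
      have := le_max_right 0 (Real.log (A / (ε/2)) / δ)
      calc Real.log (A / (ε/2)) = Real.log (A / (ε/2)) / δ * δ := by
            field_simp
        _ ≤ l * δ := by
            apply mul_le_mul_of_nonneg_right _ hδpos.le
            exact this.trans_eq hldef.symm
    have h2 : Real.exp (-(l*δ)) ≤ (ε/2) / A := by
      rw [← Real.exp_log (show (0:ℝ) < (ε/2)/A by positivity)]
      apply Real.exp_le_exp.2
      rw [Real.log_div (by positivity) (ne_of_gt hA)]
      have := Real.log_div (ne_of_gt hA) (show (ε/2) ≠ 0 by positivity)
      rw [this] at hlog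
      linarith
    calc Real.exp (-(l*δ)) * A ≤ ((ε/2)/A) * A := mul_le_mul_of_nonneg_right h2 hA.le
      _ = ε/2 := by field_simp
  -- integrability
  have hint : ∀ a b : ℝ, IntervalIntegrable (fun u => Real.exp (-(l*u)) * u ^ (-α)) volume a b := by
    intro a b
    have h1 : IntervalIntegrable (fun u : ℝ => u ^ (-α)) volume a b :=
      intervalIntegrable_rpow' (by linarith)
    exact h1.continuousOn_mul (Continuous.continuousOn (by continuity))
  -- split
  have hsplit : (∫ u in (0:ℝ)..T, Real.exp (-(l*u)) * u ^ (-α))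
      = (∫ u in (0:ℝ)..δ, Real.exp (-(l*u)) * u ^ (-α))
        + ∫ u in δ..T, Real.exp (-(l*u)) * u ^ (-α) :=
    (integral_add_adjacent_intervals (hint 0 δ) (hint δ T)).symm
  have hb1 : (∫ u in (0:ℝ)..δ, Real.exp (-(l*u)) * u ^ (-α)) ≤ ε/2 := by
    have hmono : (∫ u in (0:ℝ)..δ, Real.exp (-(l*u)) * u ^ (-α))
        ≤ ∫ u in (0:ℝ)..δ, u ^ (-α) := by
      apply integral_mono_on hδpos.le (hint 0 δ) (intervalIntegrable_rpow' (by linarith))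
      intro u hu
      have h1 : Real.exp (-(l*u)) ≤ 1 := by
        rw [Real.exp_le_one_iff]
        have : 0 ≤ l * u := mul_nonneg hl0 hu.1
        linarith
      have h2 : (0:ℝ) ≤ u ^ (-α) := Real.rpow_nonneg hu.1 _
      nlinarith
    have hval : (∫ u in (0:ℝ)..δ, u ^ (-α)) = δ ^ (1-α) / (1-α) := by
      rw [integral_rpow (Or.inl (by linarith))]
      rw [Real.zero_rpow (by intro h; rw [show -α + 1 = 1 - α by ring] at h; linarith)]
      rw [show -α + 1 = 1 - α by ring]
      ring
    rw [hval] at hmono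
    linarith
  have hb2 : (∫ u in δ..T, Real.exp (-(l*u)) * u ^ (-α)) ≤ ε/2 := by
    have hmono : (∫ u in δ..T, Real.exp (-(l*u)) * u ^ (-α))
        ≤ ∫ _u in δ..T, Real.exp (-(l*δ)) * δ ^ (-α) := by
      apply integral_mono_on hδT (hint δ T) intervalIntegrable_const
      intro u hu
      have h1 : Real.exp (-(l*u)) ≤ Real.exp (-(l*δ)) := by
        apply Real.exp_le_exp.2
        have : l * δ ≤ l * u := mul_le_mul_of_nonneg_left hu.1 hl0
        linarith
      have h2 : u ^ (-α) ≤ δ ^ (-α) :=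
        Real.rpow_le_rpow_of_nonpos hδpos hu.1 (by linarith)
      have h3 : (0:ℝ) ≤ u ^ (-α) := Real.rpow_nonneg (hδpos.le.trans hu.1) _
      nlinarith [Real.exp_pos (-(l*u)), Real.exp_pos (-(l*δ))]
    rw [intervalIntegral.integral_const, smul_eq_mul] at hmono
    have : (T - δ) * (Real.exp (-(l*δ)) * δ ^ (-α)) ≤ Real.exp (-(l*δ)) * A := by
      rw [hAdef]
      have h4 : (0:ℝ) ≤ Real.exp (-(l*δ)) * δ ^ (-α) := by positivity
      nlinarith [hδpos]
    linarith
  refine ⟨l, hl0, ?_⟩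
  rw [hsplit]; linarith
/-- Singular Gronwall inequality with exponential weight: if a continuous nonnegative
`f` on `[0,T]` satisfies
`f t ≤ M e^{κ t} c₀ + M ‖B‖ ∫₀^t e^{κ(t−s)} (t−s)^{−α} f s ds`,
then `f t ≤ c e^{ω t} c₀` with constants depending only on `M, ‖B‖, κ, α, T`. -/
theorem stmt_4 {E : Type*} [NormedAddCommGroup E] [NormedSpace ℝ E]
    (B : E →L[ℝ] E) (T M κ c₀ : ℝ) (α : ℝ) (hα : α ∈ Set.Ico (0:ℝ) 1)
    (hT : 0 < T) (hM : 1 ≤ M) (hc₀ : 0 ≤ c₀) :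
    ∃ c ≥ (1:ℝ), ∃ ω : ℝ,
      ∀ f : ℝ → ℝ, ContinuousOn f (Set.Icc 0 T) →
        (∀ t ∈ Set.Icc (0:ℝ) T, 0 ≤ f t) →
        (∀ t ∈ Set.Icc (0:ℝ) T,
          f t ≤ M * Real.exp (κ * t) * c₀ +
            M * ‖B‖ * ∫ s in (0:ℝ)..t, Real.exp (κ * (t - s)) * (t - s) ^ (-α) * f s) →
        ∀ t ∈ Set.Icc (0:ℝ) T, f t ≤ c * Real.exp (ω * t) * c₀ := by
  obtain ⟨hα0, hα1⟩ := hα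
  set K : ℝ := M * ‖B‖ + 1 with hKdef
  have hMB : (0:ℝ) ≤ M * ‖B‖ := mul_nonneg (by linarith) (norm_nonneg _)
  have hK : 0 < K := by linarith
  obtain ⟨l, hl0, hJ⟩ := gron_decay hα0 hα1 (T := T) (ε := 1/(2*K)) hT (by positivity)
  set J : ℝ := ∫ u in (0:ℝ)..T, Real.exp (-(l*u)) * u ^ (-α) with hJdef
  have hJ0 : 0 ≤ J := by
    rw [hJdef]
    apply intervalIntegral.integral_nonneg hT.le
    intro u hu
    exact mul_nonneg (Real.exp_nonneg _) (Real.rpow_nonneg hu.1 _)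
  set ω : ℝ := κ + l with hωdef
  refine ⟨2*M, by linarith, ω, ?_⟩
  intro f hfc hf0 hf
  set g : ℝ → ℝ := fun t => f t * Real.exp (-(ω*t)) with hgdef
  have hgc : ContinuousOn g (Set.Icc 0 T) :=
    hfc.mul (Continuous.continuousOn (((continuous_const.mul continuous_id).neg).rexp))
  obtain ⟨t₀, ht₀, hmax⟩ := isCompact_Icc.exists_isMaxOn
    (Set.nonempty_Icc.2 hT.le) hgc
  set N : ℝ := g t₀ with hNdef
  have hNmax : ∀ s ∈ Set.Icc (0:ℝ) T, g s ≤ N := fun s hs => hmax hs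
  have hN0 : 0 ≤ N := mul_nonneg (hf0 t₀ ht₀) (Real.exp_nonneg _)
  have hfle : ∀ s ∈ Set.Icc (0:ℝ) T, f s ≤ N * Real.exp (ω*s) := by
    intro s hs
    have := hNmax s hs
    rw [hgdef] at this
    simp only at this
    have h2 : f s * Real.exp (-(ω*s)) * Real.exp (ω*s) ≤ N * Real.exp (ω*s) :=
      mul_le_mul_of_nonneg_right this (Real.exp_nonneg _)
    rwa [mul_assoc, ← Real.exp_add, neg_add_cancel, Real.exp_zero, mul_one] at h2
  -- Key integral estimate
  have key : ∀ t ∈ Set.Icc (0:ℝ) T,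
      (∫ s in (0:ℝ)..t, Real.exp (κ * (t - s)) * (t - s) ^ (-α) * f s)
        ≤ N * Real.exp (ω * t) * J := by
    intro t ht
    have ht0 : (0:ℝ) ≤ t := ht.1
    have huIcc : Set.uIcc (0:ℝ) t = Set.Icc 0 t := Set.uIcc_of_le ht0
    have hsub : Set.Icc (0:ℝ) t ⊆ Set.Icc 0 T := Set.Icc_subset_Icc le_rfl ht.2
    have hint1 := gron_int hα0 hα1 t κ f (by rw [huIcc]; exact hfc.mono hsub)
    have hint2 := gron_int hα0 hα1 t κ (fun s => N * Real.exp (ω*s))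
      (Continuous.continuousOn (continuous_const.mul ((continuous_const.mul continuous_id).rexp)))
    have step1 : (∫ s in (0:ℝ)..t, Real.exp (κ * (t - s)) * (t - s) ^ (-α) * f s)
        ≤ ∫ s in (0:ℝ)..t, Real.exp (κ * (t - s)) * (t - s) ^ (-α) * (N * Real.exp (ω*s)) := by
      apply intervalIntegral.integral_mono_on ht0 hint1 hint2
      intro s hs
      have h1 : (0:ℝ) ≤ Real.exp (κ * (t - s)) * (t - s) ^ (-α) :=
        mul_nonneg (Real.exp_nonneg _) (Real.rpow_nonneg (by linarith [hs.2]) _)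
      exact mul_le_mul_of_nonneg_left (hfle s (hsub hs)) h1
    have step2 : (∫ s in (0:ℝ)..t, Real.exp (κ * (t - s)) * (t - s) ^ (-α) * (N * Real.exp (ω*s)))
        = N * Real.exp (ω*t) * ∫ s in (0:ℝ)..t, Real.exp (-(l*(t-s))) * (t-s) ^ (-α) := by
      rw [← intervalIntegral.integral_const_mul]
      apply intervalIntegral.integral_congr
      intro s _
      have hexp : Real.exp (κ * (t - s)) * Real.exp (ω*s)
          = Real.exp (ω*t) * Real.exp (-(l*(t-s))) := by
        rw [← Real.exp_add, ← Real.exp_add]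
        congr 1
        rw [hωdef]; ring
      calc Real.exp (κ * (t - s)) * (t - s) ^ (-α) * (N * Real.exp (ω*s))
          = N * (Real.exp (κ * (t - s)) * Real.exp (ω*s)) * (t - s) ^ (-α) := by ring
        _ = N * (Real.exp (ω*t) * Real.exp (-(l*(t-s)))) * (t - s) ^ (-α) := by rw [hexp]
        _ = N * Real.exp (ω*t) * (Real.exp (-(l*(t-s))) * (t-s) ^ (-α)) := by ring
    have step3 : (∫ s in (0:ℝ)..t, Real.exp (-(l*(t-s))) * (t-s) ^ (-α))
        = ∫ u in (0:ℝ)..t, Real.exp (-(l*u)) * u ^ (-α) := by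
      have := intervalIntegral.integral_comp_sub_left
        (fun u : ℝ => Real.exp (-(l*u)) * u ^ (-α)) t (a := 0) (b := t)
      simpa using this
    have hintF : ∀ a b : ℝ, IntervalIntegrable
        (fun u => Real.exp (-(l*u)) * u ^ (-α)) MeasureTheory.volume a b := by
      intro a b
      exact (intervalIntegrable_rpow' (by linarith)).continuousOn_mul
        (Continuous.continuousOn (((continuous_const.mul continuous_id).neg).rexp))
    have step4 : (∫ u in (0:ℝ)..t, Real.exp (-(l*u)) * u ^ (-α)) ≤ J := by
      rw [hJdef]
      apply intervalIntegral.integral_mono_interval le_rfl ht0 ht.2 _ (hintF 0 T)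
      refine Filter.Eventually.mono (MeasureTheory.ae_restrict_mem measurableSet_Ioc) ?_
      intro u hu
      simp only [Pi.zero_apply]
      exact mul_nonneg (Real.exp_nonneg _) (Real.rpow_nonneg hu.1.le _)
    calc (∫ s in (0:ℝ)..t, Real.exp (κ * (t - s)) * (t - s) ^ (-α) * f s)
        ≤ N * Real.exp (ω*t) * ∫ u in (0:ℝ)..t, Real.exp (-(l*u)) * u ^ (-α) := by
          rw [← step3, ← step2]; exact step1
      _ ≤ N * Real.exp (ω*t) * J := by
          apply mul_le_mul_of_nonneg_left step4 (by positivity)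
  -- Bound N
  have hNbound : N ≤ 2 * M * c₀ := by
    have h1 := hf t₀ ht₀
    have h2 := key t₀ ht₀
    have h3 : f t₀ ≤ M * Real.exp (κ * t₀) * c₀ + M * ‖B‖ * (N * Real.exp (ω * t₀) * J) := by
      calc f t₀ ≤ M * Real.exp (κ * t₀) * c₀ +
            M * ‖B‖ * ∫ s in (0:ℝ)..t₀, Real.exp (κ * (t₀ - s)) * (t₀ - s) ^ (-α) * f s := h1
        _ ≤ _ := by
            have := mul_le_mul_of_nonneg_left h2 hMB
            linarith
    have h4 : N ≤ M * Real.exp ((κ - ω) * t₀) * c₀ + M * ‖B‖ * N * J := by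
      have := mul_le_mul_of_nonneg_right h3 (Real.exp_nonneg (-(ω * t₀)))
      rw [hNdef, hgdef]
      simp only
      calc f t₀ * Real.exp (-(ω * t₀))
          ≤ (M * Real.exp (κ * t₀) * c₀ + M * ‖B‖ * (N * Real.exp (ω * t₀) * J))
            * Real.exp (-(ω * t₀)) := this
        _ = M * (Real.exp (κ * t₀) * Real.exp (-(ω * t₀))) * c₀
            + M * ‖B‖ * N * J * (Real.exp (ω * t₀) * Real.exp (-(ω * t₀))) := by ring
        _ = M * Real.exp ((κ - ω) * t₀) * c₀ + M * ‖B‖ * N * J := by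
            have e1 : κ * t₀ + -(ω*t₀) = (κ-ω)*t₀ := by ring
            have e2 : Real.exp (ω*t₀) * Real.exp (-(ω*t₀)) = 1 := by
              rw [← Real.exp_add]; simp
            rw [← Real.exp_add, e1, e2, mul_one]
    have h5 : Real.exp ((κ - ω) * t₀) ≤ 1 := by
      rw [Real.exp_le_one_iff, hωdef]
      have : (0:ℝ) ≤ l * t₀ := mul_nonneg hl0 ht₀.1
      nlinarith
    have h6 : M * ‖B‖ * N * J ≤ N / 2 := by
      calc M * ‖B‖ * N * J ≤ M * ‖B‖ * N * (1/(2*K)) := by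
            apply mul_le_mul_of_nonneg_left hJ (by positivity)
        _ ≤ N / 2 := by
            rw [hKdef, mul_one_div, div_le_div_iff₀ (by positivity) (by norm_num : (0:ℝ) < 2)]
            nlinarith
    have h7 : M * Real.exp ((κ - ω) * t₀) * c₀ ≤ M * c₀ := by
      nlinarith [mul_nonneg (mul_nonneg (by linarith : (0:ℝ) ≤ M) hc₀)
        (by linarith : (0:ℝ) ≤ 1 - Real.exp ((κ - ω) * t₀))]
    linarith
  -- conclude
  intro t ht
  have := hfle t ht
  calc f t ≤ N * Real.exp (ω*t) := this
    _ ≤ 2 * M * c₀ * Real.exp (ω*t) := mul_le_mul_of_nonneg_right hNbound (Real.exp_nonneg _)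
    _ = 2*M * Real.exp (ω * t) * c₀ := by ring
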